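/- Let f : ℕ → ℤ be strictly increasing with f(0) = −1 and f(x) ≥ x for every integer x ≥ 1, and assume every agent's centrality is degree homophilic with f. Let h be an APSN, let m be the maximum degree of h, let n₁* be the least k ∈ ℕ with f(k) ≥ m, and for k ≥ 2 let n_k* be the least r ∈ ℕ with f(r) ≥ n_{k−1}*. Then for all distinct vertices i, j: (a) if deg_h(i) ≥ n₁* and deg_h(j) ≥ n₁* then ij ∈ E(h); (b) if for some k ≥ 2 both n_k* ≤ deg_h(i) ≤ n_{k−1}* and n_k* ≤ deg_h(j) ≤ n_{k−1}*, then ij ∈ E(h); (c) if for some k ≥ 2, deg_h(i) ≤ n_k* and deg_h(j) > n_{k−1}*, then ij ∉ E(h). -/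

import Mathlib

open SimpleGraph

/-- Degree of vertex `i` in network `g`. -/
noncomputable def deg {V : Type*} (g : SimpleGraph V) (i : V) : ℕ :=
  Nat.card (g.neighborSet i)

/-- The network `g` with the (missing) edge `ij` added. -/
def addE {V : Type*} (g : SimpleGraph V) (i j : V) : SimpleGraph V :=
  g ⊔ SimpleGraph.fromEdgeSet {s(i, j)}

/-- The network `g` with the edge `ij` removed. -/
def delE {V : Type*} (g : SimpleGraph V) (i j : V) : SimpleGraph V :=
  g.deleteEdges {s(i, j)}

/-- Utility of agent `i` in the game with centralities `C` and edge cost `c`. -/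
noncomputable def util {V : Type*} (C : V → SimpleGraph V → ℝ) (c : ℝ) (i : V)
    (g : SimpleGraph V) : ℝ :=
  C i g - c * (deg g i)

/-- Adding the missing edge `ij` is an improving move. -/
def ImprovingAdd {V : Type*} (C : V → SimpleGraph V → ℝ) (c : ℝ) (g : SimpleGraph V)
    (i j : V) : Prop :=
  util C c i (addE g i j) ≥ util C c i g ∧ util C c j (addE g i j) ≥ util C c j g ∧
    (util C c i (addE g i j) > util C c i g ∨ util C c j (addE g i j) > util C c j g)

/-- Deleting the edge `ij` is an improving move. -/
def ImprovingDel {V : Type*} (C : V → SimpleGraph V → ℝ) (c : ℝ) (g : SimpleGraph V)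
    (i j : V) : Prop :=
  util C c i (delE g i j) > util C c i g ∨ util C c j (delE g i j) > util C c j g

/-- `g` is pairwise stable at edge cost `c`. -/
def PairwiseStable {V : Type*} (C : V → SimpleGraph V → ℝ) (c : ℝ) (g : SimpleGraph V) : Prop :=
  (∀ i j : V, i ≠ j → ¬ g.Adj i j → ¬ ImprovingAdd C c g i j) ∧
  (∀ i j : V, g.Adj i j → ¬ ImprovingDel C c g i j)

/-- `g` is asymptotically pairwise stable. -/
def APSN {V : Type*} (C : V → SimpleGraph V → ℝ) (g : SimpleGraph V) : Prop :=
  ∃ ε₀ : ℝ, 0 < ε₀ ∧ ∀ c : ℝ, 0 < c → c < ε₀ → PairwiseStable C c g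

/-- Axiom 1: the centrality of agent `i` is increasing. -/
def Axiom1 {V : Type*} (C : V → SimpleGraph V → ℝ) (i : V) : Prop :=
  ∀ (g : SimpleGraph V) (j : V), j ≠ i → ¬ g.Adj i j → C i (addE g i j) > C i g

/-- Axiom 1′: the centrality of agent `i` is decreasing. -/
def Axiom1' {V : Type*} (C : V → SimpleGraph V → ℝ) (i : V) : Prop :=
  ∀ (g : SimpleGraph V) (j : V), j ≠ i → ¬ g.Adj i j → C i (addE g i j) < C i g

/-- Axiom 2: the centrality of agent `i` is componentwise. -/
def Axiom2 {V : Type*} (C : V → SimpleGraph V → ℝ) (i : V) : Prop :=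
  ∀ (g : SimpleGraph V) (j : V), j ≠ i → ¬ g.Adj i j →
    ((g.Reachable i j → C i (addE g i j) > C i g) ∧
     (¬ g.Reachable i j → C i (addE g i j) ≤ C i g))

/-- Axiom 2′: the centrality of agent `i` is peripheral. -/
def Axiom2' {V : Type*} (C : V → SimpleGraph V → ℝ) (i : V) : Prop :=
  ∀ (g : SimpleGraph V) (j : V), j ≠ i → ¬ g.Adj i j →
    ((g.Reachable i j → C i (addE g i j) ≤ C i g) ∧
     (¬ g.Reachable i j → C i (addE g i j) > C i g))

/-- The centrality of agent `i` is degree homophilic with (strictly increasing) `f`. -/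
def DegreeHomophilic {V : Type*} (C : V → SimpleGraph V → ℝ) (i : V) (f : ℕ → ℤ) : Prop :=
  ∀ (g : SimpleGraph V) (j : V), j ≠ i → ¬ g.Adj i j →
    (C i (addE g i j) > C i g ↔ (deg g j : ℤ) ≤ f (deg g i))

lemma addE_adj {V : Type*} (g : SimpleGraph V) (i j a b : V) :
    (addE g i j).Adj a b ↔ g.Adj a b ∨ (s(a, b) = s(i, j) ∧ a ≠ b) := by
  simp [addE, SimpleGraph.fromEdgeSet_adj]

lemma addE_comm {V : Type*} (g : SimpleGraph V) (i j : V) :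
    addE g i j = addE g j i := by
  unfold addE
  rw [Sym2.eq_swap]

lemma neighborSet_addE {V : Type*} (g : SimpleGraph V) {i j : V} (hne : i ≠ j) :
    (addE g i j).neighborSet i = insert j (g.neighborSet i) := by
  ext x
  simp only [mem_neighborSet, addE_adj, Set.mem_insert_iff, Sym2.eq_iff]
  constructor
  · rintro (h | ⟨(⟨-, rfl⟩ | ⟨rfl, rfl⟩), hx⟩)
    · exact Or.inr h
    · exact Or.inl rfl
    · exact absurd rfl hx
  · rintro (rfl | h)
    · exact Or.inr ⟨Or.inl ⟨trivial, rfl⟩, hne⟩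
    · exact Or.inl h

lemma deg_addE_left {V : Type*} [Fintype V] (g : SimpleGraph V) {i j : V}
    (hne : i ≠ j) (hadj : ¬ g.Adj i j) : deg (addE g i j) i = deg g i + 1 := by
  have : j ∉ g.neighborSet i := hadj
  simp only [deg, Nat.card_coe_set_eq, neighborSet_addE g hne]
  rw [Set.ncard_insert_of_notMem this (Set.toFinite _)]

lemma deg_addE_right {V : Type*} [Fintype V] (g : SimpleGraph V) {i j : V}
    (hne : i ≠ j) (hadj : ¬ g.Adj i j) : deg (addE g i j) j = deg g j + 1 := by
  rw [addE_comm]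
  exact deg_addE_left g hne.symm (fun h => hadj h.symm)

lemma delE_adj {V : Type*} (g : SimpleGraph V) (i j a b : V) :
    (delE g i j).Adj a b ↔ g.Adj a b ∧ ¬ s(a, b) = s(i, j) := by
  simp [delE, SimpleGraph.deleteEdges_adj]

lemma delE_not_adj {V : Type*} (g : SimpleGraph V) (i j : V) :
    ¬ (delE g i j).Adj i j := by
  simp [delE_adj]

lemma addE_delE {V : Type*} (g : SimpleGraph V) {i j : V} (hadj : g.Adj i j) :
    addE (delE g i j) i j = g := by
  ext a b
  simp only [addE_adj, delE_adj]
  constructor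
  · rintro (⟨h, -⟩ | ⟨h, hne⟩)
    · exact h
    · rw [Sym2.eq_iff] at h
      rcases h with ⟨rfl, rfl⟩ | ⟨rfl, rfl⟩
      · exact hadj
      · exact hadj.symm
  · intro h
    by_cases he : s(a, b) = s(i, j)
    · exact Or.inr ⟨he, h.ne⟩
    · exact Or.inl ⟨h, he⟩

lemma neighborSet_delE {V : Type*} (g : SimpleGraph V) (i j : V) :
    (delE g i j).neighborSet i = g.neighborSet i \ {j} := by
  ext x
  simp only [mem_neighborSet, delE_adj, Set.mem_diff, Set.mem_singleton_iff, Sym2.eq_iff]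
  constructor
  · rintro ⟨h, h2⟩
    refine ⟨h, fun hx => h2 (Or.inl ⟨trivial, hx⟩)⟩
  · rintro ⟨h, h2⟩
    refine ⟨h, fun hx => ?_⟩
    rcases hx with ⟨-, rfl⟩ | ⟨rfl, rfl⟩
    · exact h2 rfl
    · exact g.irrefl h

lemma deg_delE_left {V : Type*} [Fintype V] (g : SimpleGraph V) {i j : V}
    (hadj : g.Adj i j) : deg (delE g i j) i + 1 = deg g i := by
  have : j ∈ g.neighborSet i := hadj
  simp only [deg, Nat.card_coe_set_eq, neighborSet_delE g i j]
  rw [Set.ncard_diff_singleton_add_one this (Set.toFinite _)]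

lemma deg_delE_right {V : Type*} [Fintype V] (g : SimpleGraph V) {i j : V}
    (hadj : g.Adj i j) : deg (delE g i j) j + 1 = deg g j := by
  have : delE g i j = delE g j i := by unfold delE; rw [Sym2.eq_swap]
  rw [this]
  exact deg_delE_left g hadj.symm

lemma one_le_deg {V : Type*} [Fintype V] (g : SimpleGraph V) {i j : V}
    (hadj : g.Adj i j) : 1 ≤ deg g i := by
  have : j ∈ g.neighborSet i := hadj
  have h2 : 0 < (g.neighborSet i).ncard :=
    (Set.ncard_pos (Set.toFinite _)).2 ⟨j, this⟩
  simpa [deg, Nat.card_coe_set_eq] using Nat.succ_le_of_lt h2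
lemma key_nonadj {V : Type*} [Fintype V] (C : V → SimpleGraph V → ℝ) (f : ℕ → ℤ)
    (hC : ∀ i, DegreeHomophilic C i f) (h : SimpleGraph V) (hAPSN : APSN C h)
    {i j : V} (hne : i ≠ j) (hadj : ¬ h.Adj i j) :
    ¬ (((deg h j : ℤ) ≤ f (deg h i)) ∧ ((deg h i : ℤ) ≤ f (deg h j))) := by
  rintro ⟨h1, h2⟩
  obtain ⟨ε, hε, hstab⟩ := hAPSN
  have hCi : C i (addE h i j) > C i h := (hC i h j hne.symm hadj).2 h1
  have hCj' : C j (addE h j i) > C j h := (hC j h i hne (fun ha => hadj ha.symm)).2 h2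
  rw [addE_comm h j i] at hCj'
  set Di := C i (addE h i j) - C i h with hDi
  set Dj := C j (addE h i j) - C j h with hDj
  have hDi0 : 0 < Di := by simp [hDi]; linarith
  have hDj0 : 0 < Dj := by simp [hDj]; linarith
  have hmin : 0 < min ε (min Di Dj) := lt_min hε (lt_min hDi0 hDj0)
  set c := min ε (min Di Dj) / 2 with hc
  have hc0 : 0 < c := by positivity
  have hcε : c < ε := by
    have := min_le_left ε (min Di Dj); linarith
  have hcDi : c < Di := by
    have h3 := min_le_right ε (min Di Dj)
    have h4 := min_le_left Di Dj
    linarith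
  have hcDj : c < Dj := by
    have h3 := min_le_right ε (min Di Dj)
    have h4 := min_le_right Di Dj
    linarith
  have hui : util C c i (addE h i j) > util C c i h := by
    unfold util
    rw [deg_addE_left h hne hadj]
    push_cast
    have : C i (addE h i j) - C i h = Di := by rw [hDi]
    nlinarith
  have huj : util C c j (addE h i j) > util C c j h := by
    unfold util
    rw [deg_addE_right h hne hadj]
    push_cast
    have : C j (addE h i j) - C j h = Dj := by rw [hDj]
    nlinarith
  exact (hstab c hc0 hcε).1 i j hne hadj ⟨le_of_lt hui, le_of_lt huj, Or.inl hui⟩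

lemma key_adj {V : Type*} [Fintype V] (C : V → SimpleGraph V → ℝ) (f : ℕ → ℤ)
    (hC : ∀ i, DegreeHomophilic C i f) (h : SimpleGraph V) (hAPSN : APSN C h)
    {i j : V} (hadj : h.Adj i j) :
    (deg h j : ℤ) ≤ f (deg h i - 1) + 1 := by
  obtain ⟨ε, hε, hstab⟩ := hAPSN
  set g' := delE h i j with hg'
  have hna : ¬ g'.Adj i j := delE_not_adj h i j
  have hdi : deg g' i + 1 = deg h i := deg_delE_left h hadj
  have hdj : deg g' j + 1 = deg h j := deg_delE_right h hadj
  have hstab' := (hstab (ε/2) (by positivity) (by linarith)).2 i j hadj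
  unfold ImprovingDel at hstab'
  push_neg at hstab'
  have hle := hstab'.1
  have hClt : C i g' < C i h := by
    unfold util at hle
    rw [← hg', ← hdi] at hle
    push_cast at hle
    nlinarith
  have hiff := hC i g' j hadj.ne' hna
  rw [addE_delE h hadj] at hiff
  have hkey : (deg g' j : ℤ) ≤ f (deg g' i) := hiff.1 hClt
  have : deg g' i = deg h i - 1 := by omega
  rw [this] at hkey
  omega

theorem statement_5 {V : Type*} [Fintype V] (C : V → SimpleGraph V → ℝ) (f : ℕ → ℤ)
    (hf : StrictMono f) (hf0 : f 0 = -1) (hfx : ∀ x : ℕ, 1 ≤ x → (x : ℤ) ≤ f x)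
    (hC : ∀ i, DegreeHomophilic C i f)
    (h : SimpleGraph V) (hAPSN : APSN C h)
    -- `m` is the maximum degree of `h`
    (m : ℕ) (hm : ∀ i, deg h i ≤ m) (hm' : ∃ i, deg h i = m)
    -- `ns 1 = n₁*` is the least `k` with `f k ≥ m`; `ns k = n_k*` is the least `r`
    -- with `f r ≥ n_{k-1}*`, for `k ≥ 2`
    (ns : ℕ → ℕ)
    (hns1 : (m : ℤ) ≤ f (ns 1) ∧ ∀ k : ℕ, (m : ℤ) ≤ f k → ns 1 ≤ k)
    (hnsk : ∀ k : ℕ, 2 ≤ k →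
      ((ns (k - 1) : ℤ) ≤ f (ns k) ∧ ∀ r : ℕ, (ns (k - 1) : ℤ) ≤ f r → ns k ≤ r)) :
    -- (a)
    (∀ i j : V, i ≠ j → ns 1 ≤ deg h i → ns 1 ≤ deg h j → h.Adj i j) ∧
    -- (b)
    (∀ k : ℕ, 2 ≤ k → ∀ i j : V, i ≠ j →
      ns k ≤ deg h i → deg h i ≤ ns (k - 1) → ns k ≤ deg h j → deg h j ≤ ns (k - 1) →
      h.Adj i j) ∧
    -- (c)
    (∀ k : ℕ, 2 ≤ k → ∀ i j : V, deg h i ≤ ns k → ns (k - 1) < deg h j → ¬ h.Adj i j) := by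
  have hA : ∀ i j : V, i ≠ j → ¬ h.Adj i j →
      ¬ (((deg h j : ℤ) ≤ f (deg h i)) ∧ ((deg h i : ℤ) ≤ f (deg h j))) :=
    fun i j hne hadj => key_nonadj C f hC h hAPSN hne hadj
  have hB : ∀ i j : V, h.Adj i j → (deg h j : ℤ) ≤ f (deg h i - 1) + 1 :=
    fun i j hadj => key_adj C f hC h hAPSN hadj
  refine ⟨?_, ?_, ?_⟩
  · intro i j hne h1 h2
    by_contra hadj
    refine hA i j hne hadj ⟨?_, ?_⟩
    · calc (deg h j : ℤ) ≤ (m : ℤ) := by exact_mod_cast hm j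
        _ ≤ f (ns 1) := hns1.1
        _ ≤ f (deg h i) := hf.monotone h1
    · calc (deg h i : ℤ) ≤ (m : ℤ) := by exact_mod_cast hm i
        _ ≤ f (ns 1) := hns1.1
        _ ≤ f (deg h j) := hf.monotone h2
  · intro k hk i j hne h1 h2 h3 h4
    by_contra hadj
    refine hA i j hne hadj ⟨?_, ?_⟩
    · calc (deg h j : ℤ) ≤ (ns (k-1) : ℤ) := by exact_mod_cast h4
        _ ≤ f (ns k) := (hnsk k hk).1
        _ ≤ f (deg h i) := hf.monotone h1
    · calc (deg h i : ℤ) ≤ (ns (k-1) : ℤ) := by exact_mod_cast h2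
        _ ≤ f (ns k) := (hnsk k hk).1
        _ ≤ f (deg h j) := hf.monotone h3
  · intro k hk i j h1 h2 hadj
    have hd1 : 1 ≤ deg h i := one_le_deg h hadj
    have hlt : deg h i - 1 < ns k := by omega
    have hfl : f (deg h i - 1) < (ns (k-1) : ℤ) := by
      by_contra hge
      push_neg at hge
      exact absurd ((hnsk k hk).2 _ hge) (by omega)
    have hBij := hB i j hadj
    have h2' : (ns (k-1) : ℤ) < (deg h j : ℤ) := by exact_mod_cast h2
    linarith
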